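/- Let X be a Banach space, let η be a measure of non-compactness on X*, and let ε' > ε > 0. Then for every weak*-compact subset A of X*: [η^ω]'_{ε'}(A) ⊆ [η]^ω_ε(A) ⊆ [η^ω]'_ε(A). Moreover, for every n ∈ ℕ (n ≥ 1): [η^{ω^n}]'_{ε'}(A) ⊆ [η]^{ω^n}_ε(A) ⊆ [η^{ω^n}]'_ε(A). -/

import Mathlib

open Filter Topology Set Pointwise

noncomputable section

namespace Szlenk

variable {E : Type*}

/-- The fragment derivation `[η]'_ε(A)` associated to a set function `η`:
the points of `A` all of whose neighborhoods `U` satisfy `η (A ∩ cl U) ≥ ε`. -/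
def frag [TopologicalSpace E] (η : Set E → ℝ) (ε : ℝ) (A : Set E) : Set E :=
  {x | x ∈ A ∧ ∀ U ∈ 𝓝 x, ε ≤ η (A ∩ closure U)}

/-- Transfinite iterates `[η]^γ_ε(A)` of the fragment derivation. -/
def fragIter [TopologicalSpace E] (η : Set E → ℝ) (ε : ℝ) (A : Set E) (γ : Ordinal.{0}) :
    Set E :=
  Ordinal.limitRecOn γ A (fun _ S => frag η ε S)
    (fun γ _ ih => ⋂ β : {β : Ordinal.{0} // β < γ}, ih β.1 β.2)

/-- The `ω`-iterated measure `η^ω (A) = inf {ε > 0 : [η]^ω_ε(A) = ∅}`. -/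
def etaOmega [TopologicalSpace E] (η : Set E → ℝ) (A : Set E) : ℝ :=
  sInf {ε : ℝ | 0 < ε ∧ fragIter η ε A Ordinal.omega0 = ∅}

/-- The iterates `η^{ω^n}` (with `η^{ω^0} := η` and `η^{ω^{n+1}} := (η^{ω^n})^ω`). -/
def omegaPow [TopologicalSpace E] (η : Set E → ℝ) : ℕ → Set E → ℝ
  | 0 => η
  | n + 1 => etaOmega (omegaPow η n)

/-- `η` is a measure of non compactness (with respect to the closed unit ball `ball`):
it is nonnegative, vanishes on singletons, is monotone, satisfies
`η (A ∪ B) = max (η A) (η B)`, and `η (A + l • ball) ≤ η A + l * b` for some `b > 0`.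
All conditions are required on (weak*-)compact sets only. -/
structure IsMNCOn [TopologicalSpace E] [AddCommGroup E] [Module ℝ E]
    (ball : Set E) (η : Set E → ℝ) : Prop where
  nonneg : ∀ A : Set E, IsCompact A → 0 ≤ η A
  singleton : ∀ x : E, η {x} = 0
  mono : ∀ A B : Set E, IsCompact A → IsCompact B → A ⊆ B → η A ≤ η B
  union : ∀ A B : Set E, IsCompact A → IsCompact B → η (A ∪ B) = max (η A) (η B)
  ball_add : ∃ b > 0, ∀ A : Set E, IsCompact A → ∀ l : ℝ, 0 < l →
    η (A + l • ball) ≤ η A + l * b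

/-- `η` is a measure of non compactness with the explicit constant `b` in property (iii). -/
structure IsMNCWith [TopologicalSpace E] [AddCommGroup E] [Module ℝ E]
    (ball : Set E) (b : ℝ) (η : Set E → ℝ) : Prop where
  b_pos : 0 < b
  nonneg : ∀ A : Set E, IsCompact A → 0 ≤ η A
  singleton : ∀ x : E, η {x} = 0
  mono : ∀ A B : Set E, IsCompact A → IsCompact B → A ⊆ B → η A ≤ η B
  union : ∀ A B : Set E, IsCompact A → IsCompact B → η (A ∪ B) = max (η A) (η B)
  ball_add : ∀ A : Set E, IsCompact A → ∀ l : ℝ, 0 < l →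
    η (A + l • ball) ≤ η A + l * b

/-- A sublinear measure of non compactness: homogeneous and subadditive. -/
structure IsSublinear [TopologicalSpace E] [AddCommGroup E] [Module ℝ E]
    (η : Set E → ℝ) : Prop where
  homog : ∀ (l : ℝ) (A : Set E), IsCompact A → η (l • A) = |l| * η A
  subadd : ∀ A B : Set E, IsCompact A → IsCompact B → η (A + B) ≤ η A + η B

variable {X : Type*} [NormedAddCommGroup X] [NormedSpace ℝ X]

/-- The dual norm on `X*` (the dual being equipped with its weak* topology). -/
def dnorm (f : WeakDual ℝ X) : ℝ := ‖WeakDual.toStrongDual f‖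

/-- The closed unit ball of `X*`. -/
def dualBall (X : Type*) [NormedAddCommGroup X] [NormedSpace ℝ X] :
    Set (WeakDual ℝ X) := {f | dnorm f ≤ 1}

/-- The slice derivation `⟨η⟩'_ε(A)`: the points of `A` such that every weak*-closed
halfspace containing them meets `A` in a set of `η`-measure at least `ε`. -/
def sliceD (η : Set (WeakDual ℝ X) → ℝ) (ε : ℝ) (A : Set (WeakDual ℝ X)) :
    Set (WeakDual ℝ X) :=
  {x | x ∈ A ∧ ∀ (f : X) (c : ℝ), c ≤ x f → ε ≤ η (A ∩ {y | c ≤ y f})}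

/-- Transfinite iterates `⟨η⟩^γ_ε(A)` of the slice derivation. -/
def sliceIter (η : Set (WeakDual ℝ X) → ℝ) (ε : ℝ) (A : Set (WeakDual ℝ X))
    (γ : Ordinal.{0}) : Set (WeakDual ℝ X) :=
  Ordinal.limitRecOn γ A (fun _ S => sliceD η ε S)
    (fun γ _ ih => ⋂ β : {β : Ordinal.{0} // β < γ}, ih β.1 β.2)

/-- A weak*-closed halfspace of `X*`. -/
def IsHalfspace (H : Set (WeakDual ℝ X)) : Prop :=
  ∃ (f : X) (c : ℝ), H = {y : WeakDual ℝ X | c ≤ y f}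

/-- The Kuratowski measure of non compactness associated to a (dual) norm `Nd`:
the infimum of all `ε > 0` such that `A` can be covered by finitely many balls of
diameter `ε` (i.e. of radius `ε / 2`). -/
def kurN (Nd : WeakDual ℝ X → ℝ) (A : Set (WeakDual ℝ X)) : ℝ :=
  sInf {ε : ℝ | 0 < ε ∧
    ∃ F : Finset (WeakDual ℝ X), A ⊆ ⋃ c ∈ F, {y | Nd (y - c) ≤ ε / 2}}

/-- The Kuratowski measure of non compactness on `X*`. -/
def kur (A : Set (WeakDual ℝ X)) : ℝ := kurN dnorm A

/-- The iterated sets `A^ε_β` of the convex Szlenk derivation: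
`A^ε_{β+1}` is the weak*-closed convex hull of `[σ]'_ε(A^ε_β)`. -/
def convIter (ε : ℝ) (K : Set (WeakDual ℝ X)) (γ : Ordinal.{0}) : Set (WeakDual ℝ X) :=
  Ordinal.limitRecOn γ K (fun _ S => closure (convexHull ℝ (frag kur ε S)))
    (fun γ _ ih => ⋂ β : {β : Ordinal.{0} // β < γ}, ih β.1 β.2)

/-- The families `𝒯_α` of trees on `ℕ`. A tree is a set of finite sequences of
naturals (closed under initial segments); the root is the empty sequence, and
`(n)⌢s` is represented by `n :: s`. `𝒯_0 = {{∅}}`, and `T ∈ 𝒯_α` for `α ≥ 1` if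
`T = {∅} ∪ ⋃_k (n_k)⌢T_k` with `n_k` strictly increasing, `T_k ∈ 𝒯_{α_k}`, where
`α_k = β` for all `k` if `α = β + 1`, and `α_k ↗ α` if `α` is a limit ordinal. -/
inductive IsTreeFam : Ordinal.{0} → Set (List ℕ) → Prop
  | zero : IsTreeFam 0 {[]}
  | node {α : Ordinal.{0}} (nk : ℕ → ℕ) (αk : ℕ → Ordinal.{0}) (Tk : ℕ → Set (List ℕ))
      (hnk : StrictMono nk) (hTk : ∀ k, IsTreeFam (αk k) (Tk k))
      (hα : (∃ β, α = β + 1 ∧ ∀ k, αk k = β) ∨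
            (Order.IsSuccLimit α ∧ StrictMono αk ∧ α = ⨆ k, αk k)) :
      IsTreeFam α ({[]} ∪ ⋃ k, (List.cons (nk k)) '' Tk k)

/-- A family `(x_s)_{s ∈ T}` is weak*-continuous: `x_{s⌢n} → x_s` (in the ambient,
i.e. weak*, topology) along the children of every node `s` of `T`. -/
def IsContFam [TopologicalSpace E] (T : Set (List ℕ)) (x : List ℕ → E) : Prop :=
  ∀ s ∈ T, Tendsto (fun n : ℕ => x (s ++ [n]))
    (atTop ⊓ 𝓟 {n : ℕ | s ++ [n] ∈ T}) (𝓝 (x s))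

/-- A family `(x_s)_{s ∈ T}` in `X*` is `ε`-separated: `‖x_s - x_{s⌢n}‖ ≥ ε`. -/
def IsSepFam (ε : ℝ) (T : Set (List ℕ)) (x : List ℕ → WeakDual ℝ X) : Prop :=
  ∀ s ∈ T, ∀ n : ℕ, s ++ [n] ∈ T → ε ≤ dnorm (x s - x (s ++ [n]))

/-- Norm distance from a point of `X*` to a subset of `X*`. -/
def ddist (f : WeakDual ℝ X) (A : Set (WeakDual ℝ X)) : ℝ :=
  sInf ((fun g => dnorm (f - g)) '' A)

/-- The product `η₁ × η₂` of two measures of non compactness. -/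
def prodMNC {X₁ X₂ : Type*} [NormedAddCommGroup X₁] [NormedSpace ℝ X₁]
    [NormedAddCommGroup X₂] [NormedSpace ℝ X₂]
    (η₁ : Set (WeakDual ℝ X₁) → ℝ) (η₂ : Set (WeakDual ℝ X₂) → ℝ)
    (A : Set (WeakDual ℝ X₁ × WeakDual ℝ X₂)) : ℝ :=
  sInf {ε : ℝ | 0 < ε ∧ ∃ (n : ℕ) (A₁ : Fin n → Set (WeakDual ℝ X₁))
      (A₂ : Fin n → Set (WeakDual ℝ X₂)),
      (∀ i, IsCompact (A₁ i) ∧ IsCompact (A₂ i) ∧ η₁ (A₁ i) < ε ∧ η₂ (A₂ i) < ε) ∧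
      A ⊆ ⋃ i, A₁ i ×ˢ A₂ i}

/-- The dual norm on `X*` associated to an (equivalent) norm `N` on `X`. -/
def dualNormOf (N : X → ℝ) (f : WeakDual ℝ X) : ℝ :=
  sSup ((fun x => f x) '' {x : X | N x ≤ 1})

/-- The closed unit ball of the dual norm associated to a norm `N` on `X`. -/
def dualBallOf (N : X → ℝ) : Set (WeakDual ℝ X) :=
  {f : WeakDual ℝ X | ∀ x : X, |f x| ≤ N x}


section Aux

variable {E : Type*} [TopologicalSpace E]
variable {η : Set E → ℝ} {ε δ : ℝ} {A B : Set E}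

/-- Monotonicity on compact sets. -/
def MonoC (η : Set E → ℝ) : Prop :=
  ∀ A B : Set E, IsCompact A → IsCompact B → A ⊆ B → η A ≤ η B

lemma frag_subset : frag η ε A ⊆ A := fun _ hx => hx.1

lemma isCompact_frag [T2Space E] (hA : IsCompact A) : IsCompact (frag η ε A) := by
  have hC : IsClosed {x : E | ∀ U ∈ 𝓝 x, ε ≤ η (A ∩ closure U)} := by
    rw [← isOpen_compl_iff, isOpen_iff_mem_nhds]
    intro x hx
    simp only [mem_compl_iff, mem_setOf_eq, not_forall, not_le] at hx
    obtain ⟨U, hU, hUε⟩ := hx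
    filter_upwards [interior_mem_nhds.2 hU] with y hy
    simp only [mem_compl_iff, mem_setOf_eq, not_forall, not_le]
    exact ⟨U, mem_nhds_iff.2 ⟨interior U, interior_subset, isOpen_interior, hy⟩, hUε⟩
  exact hA.inter_right hC

lemma frag_mono [T2Space E] (hm : MonoC η) (hA : IsCompact A) (hB : IsCompact B)
    (hAB : A ⊆ B) (hδε : δ ≤ ε) : frag η ε A ⊆ frag η δ B := by
  rintro x ⟨hxA, hx⟩
  refine ⟨hAB hxA, fun U hU => ?_⟩
  refine le_trans hδε ((hx U hU).trans (hm _ _ ?_ ?_ ?_))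
  · exact hA.inter_right isClosed_closure
  · exact hB.inter_right isClosed_closure
  · exact inter_subset_inter_left _ hAB

lemma fragIter_zero : fragIter η ε A 0 = A :=
  Ordinal.limitRecOn_zero ..

lemma fragIter_succ (γ : Ordinal.{0}) :
    fragIter η ε A (Order.succ γ) = frag η ε (fragIter η ε A γ) :=
  Ordinal.limitRecOn_succ ..

lemma fragIter_limit {γ : Ordinal.{0}} (hγ : Order.IsSuccLimit γ) :
    fragIter η ε A γ = ⋂ β : {β : Ordinal.{0} // β < γ}, fragIter η ε A β.1 :=
  Ordinal.limitRecOn_limit _ _ _ _ hγ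

lemma fragIter_subset (γ : Ordinal.{0}) : fragIter η ε A γ ⊆ A := by
  induction γ using Ordinal.limitRecOn with
  | zero => rw [fragIter_zero]
  | add_one γ ih => rw [Ordinal.add_one_eq_succ, fragIter_succ]; exact frag_subset.trans ih
  | limit γ hγ ih =>
      rw [fragIter_limit hγ]
      exact (iInter_subset _ (⟨0, hγ.pos⟩ : {β : Ordinal.{0} // β < γ})).trans fragIter_zero.le

lemma isCompact_fragIter [T2Space E] (hA : IsCompact A) (γ : Ordinal.{0}) :
    IsCompact (fragIter η ε A γ) := by
  induction γ using Ordinal.limitRecOn with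
  | zero => rwa [fragIter_zero]
  | add_one γ ih => rw [Ordinal.add_one_eq_succ, fragIter_succ]; exact isCompact_frag ih
  | limit γ hγ ih =>
      rw [fragIter_limit hγ]
      refine hA.of_isClosed_subset (isClosed_iInter fun β => (ih β.1 β.2).isClosed) ?_
      exact (iInter_subset _ (⟨0, hγ.pos⟩ : {β : Ordinal.{0} // β < γ})).trans fragIter_zero.le

lemma fragIter_anti {β γ : Ordinal.{0}} (h : β ≤ γ) :
    fragIter η ε A γ ⊆ fragIter η ε A β := by
  induction γ using Ordinal.limitRecOn with
  | zero => rw [nonpos_iff_eq_zero.1 h]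
  | add_one γ ih =>
      rw [Ordinal.add_one_eq_succ] at h ⊢
      rcases eq_or_lt_of_le h with rfl | h
      · exact Subset.rfl
      · rw [fragIter_succ]
        exact frag_subset.trans (ih (Order.lt_succ_iff.1 h))
  | limit γ hγ ih =>
      rcases eq_or_lt_of_le h with rfl | h
      · exact Subset.rfl
      · rw [fragIter_limit hγ]
        exact iInter_subset _ (⟨β, h⟩ : {b : Ordinal.{0} // b < γ})

lemma fragIter_mono [T2Space E] (hm : MonoC η) (hA : IsCompact A) (hB : IsCompact B)
    (hAB : A ⊆ B) (hδε : δ ≤ ε) (γ : Ordinal.{0}) :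
    fragIter η ε A γ ⊆ fragIter η δ B γ := by
  induction γ using Ordinal.limitRecOn with
  | zero => rw [fragIter_zero, fragIter_zero]; exact hAB
  | add_one γ ih =>
      rw [Ordinal.add_one_eq_succ, fragIter_succ, fragIter_succ]
      exact frag_mono hm (isCompact_fragIter hA γ) (isCompact_fragIter hB γ) ih hδε
  | limit γ hγ ih =>
      rw [fragIter_limit hγ, fragIter_limit hγ]
      exact iInter_mono fun β => ih β.1 β.2

lemma fragIter_add (α β : Ordinal.{0}) :
    fragIter η ε A (α + β) = fragIter η ε (fragIter η ε A α) β := by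
  induction β using Ordinal.limitRecOn with
  | zero => rw [add_zero, fragIter_zero]
  | add_one β ih => rw [← add_assoc, Ordinal.add_one_eq_succ, Ordinal.add_one_eq_succ, fragIter_succ, fragIter_succ, ih]
  | limit β hβ ih =>
      rw [fragIter_limit hβ, fragIter_limit (Ordinal.isSuccLimit_add α hβ)]
      ext x
      simp only [mem_iInter, Subtype.forall]
      constructor
      · intro h b hb
        rw [← ih b hb]
        exact h _ ((add_lt_add_iff_left α).2 hb)
      · intro h c hc
        obtain ⟨d, hd, hcd⟩ := (Ordinal.lt_add_iff hβ.pos.ne').1 hc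
        have hx : x ∈ fragIter η ε A (α + d) := by
          rw [ih d hd]; exact h d hd
        exact fragIter_anti hcd hx

lemma fragIter_natCast (n : ℕ) :
    fragIter η ε A (n : Ordinal.{0}) = (frag η ε)^[n] A := by
  induction n with
  | zero => rw [Nat.cast_zero, fragIter_zero, Function.iterate_zero_apply]
  | succ n ih =>
      rw [Nat.cast_succ, Ordinal.add_one_eq_succ, fragIter_succ, ih]
      exact (Function.iterate_succ_apply' _ _ _).symm

lemma fragIter_omega0_eq :
    fragIter η ε A Ordinal.omega0 = ⋂ n : ℕ, (frag η ε)^[n] A := by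
  rw [fragIter_limit Ordinal.isSuccLimit_omega0]
  apply Subset.antisymm
  · refine subset_iInter fun n => ?_
    exact (iInter_subset _ ⟨(n : Ordinal.{0}), Ordinal.nat_lt_omega0 n⟩).trans
      (fragIter_natCast n).le
  · intro x hx
    refine mem_iInter.2 fun b => ?_
    obtain ⟨β, hβ⟩ := b
    obtain ⟨n, rfl⟩ := Ordinal.lt_omega0.1 hβ
    rw [fragIter_natCast n]
    exact mem_iInter.1 hx n

lemma fragIter_mul_natCast (α : Ordinal.{0}) (n : ℕ) :
    fragIter η ε A (α * n) = (fun B => fragIter η ε B α)^[n] A := by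
  induction n with
  | zero => rw [Nat.cast_zero, mul_zero, fragIter_zero, Function.iterate_zero_apply]
  | succ n ih =>
      rw [Nat.cast_succ, mul_add, mul_one, fragIter_add, ih]
      exact (Function.iterate_succ_apply' (fun B => fragIter η ε B α) n A).symm

lemma fragIter_mul_omega0 {α : Ordinal.{0}} (hα : α ≠ 0) :
    fragIter η ε A (α * Ordinal.omega0) = ⋂ n : ℕ, (fun B => fragIter η ε B α)^[n] A := by
  rw [fragIter_limit (Ordinal.isSuccLimit_mul_right (pos_iff_ne_zero.2 hα) Ordinal.isSuccLimit_omega0)]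
  apply Subset.antisymm
  · refine subset_iInter fun n => ?_
    refine (iInter_subset _ ⟨α * (n : Ordinal.{0}), ?_⟩).trans (fragIter_mul_natCast α n).le
    exact mul_lt_mul_of_pos_left (Ordinal.natCast_lt_omega0 n) (pos_iff_ne_zero.2 hα)
  · intro x hx
    refine mem_iInter.2 fun b => ?_
    obtain ⟨β, hβ⟩ := b
    obtain ⟨c, hc, hbc⟩ := (Ordinal.lt_mul_iff_of_isSuccLimit Ordinal.isSuccLimit_omega0).1 hβ
    obtain ⟨n, rfl⟩ := Ordinal.lt_omega0.1 hc
    refine fragIter_anti hbc.le ?_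
    rw [fragIter_mul_natCast α n]
    exact mem_iInter.1 hx n

lemma fragIter_inter_closure [T2Space E] [RegularSpace E] (hm : MonoC η)
    (γ : Ordinal.{0}) :
    ∀ A : Set E, IsCompact A → ∀ U : Set E, IsOpen U →
      ∀ x, x ∈ fragIter η ε A γ → x ∈ U → x ∈ fragIter η ε (A ∩ closure U) γ := by
  induction γ using Ordinal.limitRecOn with
  | zero =>
      intro A hA U hU x hx hxU
      rw [fragIter_zero] at hx ⊢
      exact ⟨hx, subset_closure hxU⟩
  | add_one γ ih =>
      intro A hA U hU x hx hxU
      rw [Ordinal.add_one_eq_succ, fragIter_succ] at hx ⊢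
      obtain ⟨hx1, hx2⟩ := hx
      obtain ⟨C, hCmem, hCclosed, hCU⟩ := exists_mem_nhds_isClosed_subset (hU.mem_nhds hxU)
      have hxV : x ∈ interior C := mem_interior_iff_mem_nhds.2 hCmem
      have hVU : closure (interior C) ⊆ U :=
        (closure_minimal interior_subset hCclosed).trans hCU
      refine ⟨ih A hA U hU x hx1 hxU, fun W hW => ?_⟩
      have h1 : ε ≤ η (fragIter η ε A γ ∩ closure (W ∩ interior C)) :=
        hx2 (W ∩ interior C) (Filter.inter_mem hW (isOpen_interior.mem_nhds hxV))
      refine le_trans h1 (hm _ _ ?_ ?_ ?_)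
      · exact (isCompact_fragIter hA γ).inter_right isClosed_closure
      · exact (isCompact_fragIter (hA.inter_right isClosed_closure) γ).inter_right
          isClosed_closure
      · rintro y ⟨hy1, hy2⟩
        have hyV : y ∈ closure (interior C) := closure_mono inter_subset_right hy2
        have hyW : y ∈ closure W := closure_mono inter_subset_left hy2
        exact ⟨ih A hA U hU y hy1 (hVU hyV), hyW⟩
  | limit γ hγ ih =>
      intro A hA U hU x hx hxU
      rw [fragIter_limit hγ] at hx ⊢
      exact mem_iInter.2 fun b => ih b.1 b.2 A hA U hU x (mem_iInter.1 hx b) hxU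

lemma exists_fragIter_omega0_empty [T2Space E] (hm : MonoC η) (hA : IsCompact A) :
    ∃ δ : ℝ, 0 < δ ∧ fragIter η δ A Ordinal.omega0 = ∅ := by
  refine ⟨max (η A) 0 + 1, by have := le_max_right (η A) 0; linarith, ?_⟩
  have h1 : frag η (max (η A) 0 + 1) A = ∅ := by
    ext x
    simp only [mem_empty_iff_false, iff_false]
    rintro ⟨hxA, hx⟩
    have h2 := hx univ Filter.univ_mem
    rw [closure_univ, inter_univ] at h2
    have h3 : η A ≤ max (η A) 0 := le_max_left _ _
    linarith
  have h2 : fragIter η (max (η A) 0 + 1) A 1 = ∅ := by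
    rw [show (1 : Ordinal.{0}) = Order.succ 0 by rw [← Ordinal.add_one_eq_succ, zero_add],
      fragIter_succ, fragIter_zero, h1]
  rw [← subset_empty_iff, ← h2]
  exact fragIter_anti Ordinal.one_lt_omega0.le

lemma etaOmega_monoC [T2Space E] (hm : MonoC η) : MonoC (etaOmega η) := by
  intro A B hA hB hAB
  refine csInf_le_csInf ⟨0, fun δ hδ => hδ.1.le⟩ ?_ ?_
  · obtain ⟨δ, h1, h2⟩ := exists_fragIter_omega0_empty hm hB
    exact ⟨δ, h1, h2⟩
  · rintro δ ⟨hδ, hB0⟩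
    refine ⟨hδ, subset_empty_iff.1 ?_⟩
    rw [← hB0]
    exact fragIter_mono hm hA hB hAB le_rfl _

lemma subset_frag_etaOmega [T2Space E] [RegularSpace E] (hm : MonoC η) (hε : 0 < ε)
    (hA : IsCompact A) :
    fragIter η ε A Ordinal.omega0 ⊆ frag (etaOmega η) ε A := by
  intro x hx
  refine ⟨fragIter_subset _ hx, fun U hU => ?_⟩
  have hAU : IsCompact (A ∩ closure U) := hA.inter_right isClosed_closure
  refine le_csInf ?_ ?_
  · obtain ⟨δ, h1, h2⟩ := exists_fragIter_omega0_empty hm hAU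
    exact ⟨δ, h1, h2⟩
  · rintro δ ⟨hδ0, hδe⟩
    by_contra hlt
    push_neg at hlt
    have hxint : x ∈ interior U := mem_interior_iff_mem_nhds.2 hU
    have h1 : x ∈ fragIter η ε (A ∩ closure (interior U)) Ordinal.omega0 :=
      fragIter_inter_closure hm _ A hA _ isOpen_interior x hx hxint
    have h2 : x ∈ fragIter η δ (A ∩ closure U) Ordinal.omega0 :=
      fragIter_mono hm (hA.inter_right isClosed_closure) hAU
        (inter_subset_inter_right _ (closure_mono interior_subset)) hlt.le _ h1
    rw [hδe] at h2
    exact h2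

lemma frag_etaOmega_subset [T2Space E] (hm : MonoC η) {ε' : ℝ} (hε : 0 < ε)
    (hεε' : ε < ε') (hA : IsCompact A) :
    frag (etaOmega η) ε' A ⊆ fragIter η ε A Ordinal.omega0 := by
  rintro x ⟨hxA, hx⟩
  have key : ∀ U ∈ 𝓝 x, ∀ γ : Ordinal.{0}, γ ≤ Ordinal.omega0 →
      (fragIter η ε (A ∩ closure U) γ).Nonempty := by
    intro U hU γ hγ
    by_contra h
    rw [Set.not_nonempty_iff_eq_empty] at h
    have h1 : fragIter η ε (A ∩ closure U) Ordinal.omega0 = ∅ := by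
      rw [← subset_empty_iff, ← h]
      exact fragIter_anti hγ
    have h2 : etaOmega η (A ∩ closure U) ≤ ε :=
      csInf_le ⟨0, fun δ hδ => hδ.1.le⟩ ⟨hε, h1⟩
    have h3 := hx U hU
    linarith
  have main : ∀ n : ℕ, x ∈ (frag η ε)^[n] A := by
    intro n
    induction n with
    | zero => exact hxA
    | succ n ih =>
        rw [Function.iterate_succ_apply']
        refine ⟨ih, fun U hU => ?_⟩
        obtain ⟨y, hy⟩ := key U hU ((n + 1 : ℕ) : Ordinal.{0}) (Ordinal.nat_lt_omega0 _).le
        rw [fragIter_natCast, Function.iterate_succ_apply'] at hy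
        have h1 : ε ≤ η ((frag η ε)^[n] (A ∩ closure U)) := by
          have h2 := hy.2 univ Filter.univ_mem
          rwa [closure_univ, inter_univ] at h2
        have hcomp1 : IsCompact ((frag η ε)^[n] (A ∩ closure U)) := by
          rw [← fragIter_natCast]
          exact isCompact_fragIter (hA.inter_right isClosed_closure) _
        have hcomp2 : IsCompact ((frag η ε)^[n] A ∩ closure U) := by
          rw [← fragIter_natCast]
          exact (isCompact_fragIter hA _).inter_right isClosed_closure
        refine le_trans h1 (hm _ _ hcomp1 hcomp2 ?_)
        intro z hz
        refine ⟨?_, ?_⟩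
        · rw [← fragIter_natCast] at hz ⊢
          exact fragIter_mono hm (hA.inter_right isClosed_closure) hA inter_subset_left
            le_rfl _ hz
        · have h4 : z ∈ A ∩ closure U := by
            rw [← fragIter_natCast] at hz
            exact fragIter_subset _ hz
          exact h4.2
  rw [fragIter_omega0_eq]
  exact mem_iInter.2 main

lemma monoC_omegaPow [T2Space E] (hm : MonoC η) : ∀ n, MonoC (omegaPow η n)
  | 0 => hm
  | n + 1 => etaOmega_monoC (monoC_omegaPow hm n)

lemma omegaPow_sandwich [T2Space E] [RegularSpace E] (hm : MonoC η) :
    ∀ n : ℕ, 1 ≤ n → ∀ ε ε' : ℝ, 0 < ε → ε < ε' → ∀ A : Set E, IsCompact A →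
      frag (omegaPow η n) ε' A ⊆ fragIter η ε A (Ordinal.omega0 ^ (n : Ordinal.{0})) ∧
      fragIter η ε A (Ordinal.omega0 ^ (n : Ordinal.{0})) ⊆ frag (omegaPow η n) ε A := by
  intro n
  induction n with
  | zero => intro h; exact absurd h (by norm_num)
  | succ n ih =>
    intro _ ε ε' hε hεε' A hA
    rcases Nat.eq_zero_or_pos n with rfl | hn
    · have hcast : (((0 + 1 : ℕ)) : Ordinal.{0}) = 1 := by norm_num
      rw [hcast, Ordinal.opow_one]
      exact ⟨frag_etaOmega_subset hm hε hεε' hA, subset_frag_etaOmega hm hε hA⟩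
    · have hζm : MonoC (omegaPow η n) := monoC_omegaPow hm n
      have hωn : (Ordinal.omega0 ^ ((n + 1 : ℕ) : Ordinal.{0})) =
          Ordinal.omega0 ^ (n : Ordinal.{0}) * Ordinal.omega0 := by
        rw [Nat.cast_succ, Ordinal.add_one_eq_succ, Ordinal.opow_succ]
      have hne : (Ordinal.omega0 ^ (n : Ordinal.{0})) ≠ 0 :=
        Ordinal.opow_ne_zero _ Ordinal.omega0_ne_zero
      have hDcomp : ∀ k : ℕ,
          IsCompact ((fun B => fragIter η ε B (Ordinal.omega0 ^ (n : Ordinal.{0})))^[k] A) := by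
        intro k
        induction k with
        | zero => exact hA
        | succ k ihk =>
            rw [Function.iterate_succ_apply']
            exact isCompact_fragIter ihk _
      constructor
      · set ε'' := (ε + ε') / 2 with hε''
        have hε''1 : ε < ε'' := by rw [hε'']; linarith
        have hε''2 : ε'' < ε' := by rw [hε'']; linarith
        have step1 : frag (etaOmega (omegaPow η n)) ε' A ⊆
            fragIter (omegaPow η n) ε'' A Ordinal.omega0 :=
          frag_etaOmega_subset hζm (hε.trans hε''1) hε''2 hA
        have step2 : ∀ k : ℕ, (frag (omegaPow η n) ε'')^[k] A ⊆
            (fun B => fragIter η ε B (Ordinal.omega0 ^ (n : Ordinal.{0})))^[k] A ∧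
            IsCompact ((frag (omegaPow η n) ε'')^[k] A) := by
          intro k
          induction k with
          | zero => exact ⟨Subset.rfl, hA⟩
          | succ k ihk =>
              refine ⟨?_, by rw [Function.iterate_succ_apply']; exact isCompact_frag ihk.2⟩
              rw [Function.iterate_succ_apply', Function.iterate_succ_apply']
              refine Subset.trans (ih hn ε ε'' hε hε''1 _ ihk.2).1 ?_
              exact fragIter_mono hm ihk.2 (hDcomp k) ihk.1 le_rfl _
        rw [hωn, fragIter_mul_omega0 hne]
        refine step1.trans ?_
        rw [fragIter_omega0_eq]
        exact iInter_mono fun k => (step2 k).1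
      · have step2 : ∀ k : ℕ,
            (fun B => fragIter η ε B (Ordinal.omega0 ^ (n : Ordinal.{0})))^[k] A ⊆
              (frag (omegaPow η n) ε)^[k] A ∧
            IsCompact ((frag (omegaPow η n) ε)^[k] A) := by
          intro k
          induction k with
          | zero => exact ⟨Subset.rfl, hA⟩
          | succ k ihk =>
              refine ⟨?_, by rw [Function.iterate_succ_apply']; exact isCompact_frag ihk.2⟩
              rw [Function.iterate_succ_apply', Function.iterate_succ_apply']
              refine Subset.trans (ih hn ε (ε + 1) hε (by linarith) _ (hDcomp k)).2 ?_
              exact frag_mono hζm (hDcomp k) ihk.2 ihk.1 le_rfl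
        rw [hωn, fragIter_mul_omega0 hne]
        refine Subset.trans ?_ (subset_frag_etaOmega hζm hε hA)
        rw [fragIter_omega0_eq]
        exact iInter_mono fun k => (step2 k).1

end Aux

/-- For a measure of non compactness `η` on `X*`, `ε' > ε > 0` and `A` weak*-compact:
`[η^ω]'_{ε'}(A) ⊆ [η]^ω_ε(A) ⊆ [η^ω]'_ε(A)`, and for every `n ≥ 1`,
`[η^{ω^n}]'_{ε'}(A) ⊆ [η]^{ω^n}_ε(A) ⊆ [η^{ω^n}]'_ε(A)`. -/
theorem frag_etaOmega_sandwich
    {X : Type*} [NormedAddCommGroup X] [NormedSpace ℝ X] [CompleteSpace X]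
    (η : Set (WeakDual ℝ X) → ℝ) (hη : IsMNCOn (dualBall X) η)
    (ε ε' : ℝ) (hε : 0 < ε) (hεε' : ε < ε')
    (A : Set (WeakDual ℝ X)) (hA : IsCompact A) :
    (frag (etaOmega η) ε' A ⊆ fragIter η ε A Ordinal.omega0 ∧
      fragIter η ε A Ordinal.omega0 ⊆ frag (etaOmega η) ε A) ∧
    (∀ n : ℕ, 1 ≤ n →
      frag (omegaPow η n) ε' A ⊆ fragIter η ε A (Ordinal.omega0 ^ (n : Ordinal.{0})) ∧
      fragIter η ε A (Ordinal.omega0 ^ (n : Ordinal.{0})) ⊆ frag (omegaPow η n) ε A) := by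
  have hm : MonoC η := hη.mono
  refine ⟨⟨frag_etaOmega_subset hm hε hεε' hA, subset_frag_etaOmega hm hε hA⟩, ?_⟩
  intro n hn
  exact omegaPow_sandwich hm n hn ε ε' hε hεε' A hA

end Szlenk
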